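/- Fix ρ ∈ 𝒞, P ∈ 𝒫^ρ_d and α ∈ (0,1). Then the order-α M-quantile region R^ρ_α(P) is a convex and compact subset of the C-support C_P. Moreover, if ρ(t) = |t|^r with r ≥ 1, then R^ρ_α(P_{A,b}) = A·R^ρ_α(P) + b for every invertible d×d matrix A and every b ∈ ℝ^d, where P_{A,b} is the pushforward of P under z ↦ Az + b. -/

import Mathlib

open MeasureTheory Set Filter
open scoped RealInnerProductSpace ENNReal
open scoped Topology

noncomputable section

/-- The class `𝒞` of loss functions: convex, nonnegative, even, vanishing only at `0`. -/
def LossClass (ρ : ℝ → ℝ) : Prop :=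
  ConvexOn ℝ Set.univ ρ ∧ (∀ t, 0 ≤ ρ t) ∧ (∀ t, ρ (-t) = ρ t) ∧ (∀ t, ρ t = 0 ↔ t = 0)

/-- `ψ` is the left-derivative of `ρ`. -/
def IsLeftDeriv (ρ ψ : ℝ → ℝ) : Prop :=
  ∀ x : ℝ, HasDerivWithinAt ρ (ψ x) (Set.Iio x) x

/-- `G^ρ_Q(θ) = E_Q[|ψ₋(Y−θ)|·𝟙[Y ≤ θ]] / E_Q[|ψ₋(Y−θ)|]` (equal to `0` when the
denominator vanishes, by the Lean convention for division by zero). -/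
def Gfun (ψ : ℝ → ℝ) (Q : Measure ℝ) (θ : ℝ) : ℝ :=
  (∫ y, |ψ (y - θ)| * (if y ≤ θ then 1 else 0) ∂Q) / ∫ y, |ψ (y - θ)| ∂Q

/-- The order-`α` M-quantile `θ^ρ_α(Q) = inf{θ : G^ρ_Q(θ) ≥ α}` of a law `Q` on `ℝ`. -/
def MQuant (ψ : ℝ → ℝ) (Q : Measure ℝ) (α : ℝ) : ℝ :=
  sInf {θ : ℝ | α ≤ Gfun ψ Q θ}

/-- The pushforward `P_u` of `P` under `z ↦ u'z`. -/
def dirProj {d : ℕ} (P : Measure (EuclideanSpace ℝ (Fin d)))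
    (u : EuclideanSpace ℝ (Fin d)) : Measure ℝ :=
  P.map (fun z => ⟪u, z⟫)

/-- The order-`α` M-quantile halfspace `H^ρ_{α,u}(P) = {z : u'z ≥ θ^ρ_α(P_u)}`. -/
def MHalf {d : ℕ} (ψ : ℝ → ℝ) (P : Measure (EuclideanSpace ℝ (Fin d))) (α : ℝ)
    (u : EuclideanSpace ℝ (Fin d)) : Set (EuclideanSpace ℝ (Fin d)) :=
  {z | MQuant ψ (dirProj P u) α ≤ ⟪u, z⟫}

/-- The order-`α` M-quantile hyperplane `π^ρ_{α,u}(P) = {z : u'z = θ^ρ_α(P_u)}`. -/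
def MHyp {d : ℕ} (ψ : ℝ → ℝ) (P : Measure (EuclideanSpace ℝ (Fin d))) (α : ℝ)
    (u : EuclideanSpace ℝ (Fin d)) : Set (EuclideanSpace ℝ (Fin d)) :=
  {z | ⟪u, z⟫ = MQuant ψ (dirProj P u) α}

/-- The order-`α` M-quantile region `R^ρ_α(P) = ⋂_{u ∈ S^{d−1}} H^ρ_{α,u}(P)`. -/
def MRegion {d : ℕ} (ψ : ℝ → ℝ) (P : Measure (EuclideanSpace ℝ (Fin d))) (α : ℝ) :
    Set (EuclideanSpace ℝ (Fin d)) :=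
  ⋂ u ∈ {u : EuclideanSpace ℝ (Fin d) | ‖u‖ = 1}, MHalf ψ P α u

/-- The halfspace M-depth `MD^ρ(z,P) = sup{α > 0 : z ∈ R^ρ_α(P)}` (with `sup ∅ = 0`,
which is the Lean convention for `sSup` of the empty set of reals). -/
def MDepth {d : ℕ} (ψ : ℝ → ℝ) (P : Measure (EuclideanSpace ℝ (Fin d)))
    (z : EuclideanSpace ℝ (Fin d)) : ℝ :=
  sSup {α : ℝ | α ∈ Set.Ioo (0 : ℝ) 1 ∧ z ∈ MRegion ψ P α}

/-- The C-support `C_P = {z : P[{y : u'y ≤ u'z}] > 0 for every unit u}`. -/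
def Csupport {d : ℕ} (P : Measure (EuclideanSpace ℝ (Fin d))) :
    Set (EuclideanSpace ℝ (Fin d)) :=
  {z | ∀ u : EuclideanSpace ℝ (Fin d), ‖u‖ = 1 → 0 < P {y | ⟪u, y⟫ ≤ ⟪u, z⟫}}

-- slope tendsto
lemma psi_tendsto {ρ ψ : ℝ → ℝ} (hψ : IsLeftDeriv ρ ψ) (x : ℝ) :
    Tendsto (slope ρ x) (𝓝[Set.Iio x] x) (𝓝 (ψ x)) := by
  have := (hasDerivWithinAt_iff_tendsto_slope).1 (hψ x)
  rwa [diff_singleton_eq_self (by simp)] at this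

lemma psi_le_slope {ρ ψ : ℝ → ℝ} (hρ : ConvexOn ℝ Set.univ ρ) (hψ : IsLeftDeriv ρ ψ)
    {x y : ℝ} (hxy : x < y) : ψ x ≤ slope ρ x y := by
  refine le_of_tendsto (psi_tendsto hψ x) ?_
  filter_upwards [self_mem_nhdsWithin] with w (hw : w < x)
  simp only [slope_def_field]
  exact hρ.secant_mono trivial trivial trivial (ne_of_lt hw) (ne_of_gt hxy) (le_of_lt (hw.trans hxy))

lemma slope_le_psi {ρ ψ : ℝ → ℝ} (hρ : ConvexOn ℝ Set.univ ρ) (hψ : IsLeftDeriv ρ ψ)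
    {x y : ℝ} (hxy : x < y) : slope ρ x y ≤ ψ y := by
  refine ge_of_tendsto (psi_tendsto hψ y) ?_
  have hx : Set.Ioi x ∈ 𝓝[Set.Iio y] y :=
    nhdsWithin_le_nhds (Ioi_mem_nhds hxy)
  filter_upwards [self_mem_nhdsWithin, hx] with w (hw : w < y) (hw2 : x < w)
  have h1 : slope ρ x y ≤ slope ρ w y := by
    rw [slope_comm ρ x y, slope_comm ρ w y]
    simp only [slope_def_field]
    exact hρ.secant_mono trivial trivial trivial (ne_of_lt hxy) (ne_of_lt hw) (le_of_lt hw2)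
  rwa [slope_comm ρ y w]

lemma psi_mono {ρ ψ : ℝ → ℝ} (hρ : ConvexOn ℝ Set.univ ρ) (hψ : IsLeftDeriv ρ ψ) :
    Monotone ψ := by
  intro x y hxy
  rcases eq_or_lt_of_le hxy with rfl | h
  · exact le_rfl
  · exact (psi_le_slope hρ hψ h).trans (slope_le_psi hρ hψ h)

lemma psi_neg {ρ ψ : ℝ → ℝ} (hρ : LossClass ρ) (hψ : IsLeftDeriv ρ ψ)
    {t : ℝ} (ht : t < 0) : ψ t < 0 := by
  have h := psi_le_slope hρ.1 hψ ht
  have hρ0 : ρ 0 = 0 := (hρ.2.2.2 0).2 rfl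
  have hρt : 0 < ρ t := lt_of_le_of_ne (hρ.2.1 t) (fun h => ht.ne ((hρ.2.2.2 t).1 h.symm))
  have : slope ρ t 0 < 0 := by
    rw [slope_def_field]; rw [hρ0]
    exact div_neg_of_neg_of_pos (by linarith) (by linarith)
  linarith
lemma psi_pos {ρ ψ : ℝ → ℝ} (hρ : LossClass ρ) (hψ : IsLeftDeriv ρ ψ)
    {t : ℝ} (ht : 0 < t) : 0 < ψ t := by
  have h := slope_le_psi hρ.1 hψ ht
  have hρ0 : ρ 0 = 0 := (hρ.2.2.2 0).2 rfl
  have hρt : 0 < ρ t := lt_of_le_of_ne (hρ.2.1 t) (fun h => ht.ne' ((hρ.2.2.2 t).1 h.symm))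
  have : 0 < slope ρ 0 t := by
    rw [slope_def_field, hρ0]
    exact div_pos (by linarith) (by linarith)
  linarith
lemma psi_zero {ρ ψ : ℝ → ℝ} (hρ : LossClass ρ) (hψ : IsLeftDeriv ρ ψ) : ψ 0 ≤ 0 := by
  refine le_of_tendsto (psi_tendsto hψ 0) ?_
  filter_upwards [self_mem_nhdsWithin] with w (hw : w < 0)
  have hρ0 : ρ 0 = 0 := (hρ.2.2.2 0).2 rfl
  rw [slope_def_field, hρ0]
  exact div_nonpos_of_nonneg_of_nonpos (by simpa using hρ.2.1 w) (by linarith)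

section Univ

variable {ψ : ℝ → ℝ} (hm : Monotone ψ) (h0 : ψ 0 ≤ 0)
  (hneg : ∀ t < 0, ψ t < 0) (hpos : ∀ t > 0, 0 < ψ t)
  {Q : Measure ℝ} [IsProbabilityMeasure Q]
  (hint : ∀ θ : ℝ, Integrable (fun t => |ψ (t - θ)|) Q)

lemma Gfun_eq (θ : ℝ) :
    Gfun ψ Q θ = (∫ y in Iic θ, |ψ (y - θ)| ∂Q) / ∫ y, |ψ (y - θ)| ∂Q := by
  rw [Gfun, ← integral_indicator measurableSet_Iic]
  congr 1
  refine integral_congr_ae (Eventually.of_forall fun y => ?_)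
  by_cases h : y ≤ θ <;> simp [Set.indicator, h]

-- tail integral vanishing
lemma tail_right {g : ℝ → ℝ} (hg : Integrable g Q) :
    Tendsto (fun n : ℕ => ∫ y in Ioi (n : ℝ), g y ∂Q) atTop (𝓝 0) := by
  have h : Tendsto (fun n : ℕ => ∫ y, (Ioi (n:ℝ)).indicator g y ∂Q) atTop
      (𝓝 (∫ _, (0:ℝ) ∂Q)) := by
    refine tendsto_integral_of_dominated_convergence (fun y => |g y|)
      (fun n => hg.aestronglyMeasurable.indicator measurableSet_Ioi) hg.abs
      (fun n => Eventually.of_forall fun y => ?_)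
      (Eventually.of_forall fun y => ?_)
    · rw [Real.norm_eq_abs]
      by_cases h : y ∈ Ioi (n:ℝ) <;> simp [Set.indicator, h, abs_nonneg]
    · refine tendsto_const_nhds.congr' ?_
      filter_upwards [eventually_ge_atTop ⌈y⌉₊] with n hn
      have : ¬ ((n:ℝ) < y) := not_lt.2 ((Nat.le_ceil y).trans (by exact_mod_cast hn))
      simp [Set.indicator, this]
  simpa [integral_indicator measurableSet_Ioi] using h

lemma tail_left {g : ℝ → ℝ} (hg : Integrable g Q) :
    Tendsto (fun n : ℕ => ∫ y in Iic (-(n : ℝ)), g y ∂Q) atTop (𝓝 0) := by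
  have h : Tendsto (fun n : ℕ => ∫ y, (Iic (-(n:ℝ))).indicator g y ∂Q) atTop
      (𝓝 (∫ _, (0:ℝ) ∂Q)) := by
    refine tendsto_integral_of_dominated_convergence (fun y => |g y|)
      (fun n => hg.aestronglyMeasurable.indicator measurableSet_Iic) hg.abs
      (fun n => Eventually.of_forall fun y => ?_)
      (Eventually.of_forall fun y => ?_)
    · rw [Real.norm_eq_abs]
      by_cases h : y ∈ Iic (-(n:ℝ)) <;> simp [Set.indicator, h, abs_nonneg]
    · refine tendsto_const_nhds.congr' ?_
      filter_upwards [eventually_ge_atTop (⌈-y⌉₊ + 1)] with n hn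
      have h1 : -y ≤ (⌈-y⌉₊ : ℝ) := Nat.le_ceil _
      have h2 : ((⌈-y⌉₊ : ℝ)) + 1 ≤ (n:ℝ) := by exact_mod_cast hn
      have : ¬ (y ≤ -(n:ℝ)) := by linarith
      simp [Set.indicator, this]
  simpa [integral_indicator measurableSet_Iic] using h

lemma ex_Iic_pos : ∃ t₀ : ℝ, 0 < Q (Iic t₀) := by
  by_contra h
  push_neg at h
  have h' : ∀ n : ℕ, Q (Iic (n:ℝ)) = 0 := fun n => le_antisymm (h _) zero_le
  have : Q (⋃ n : ℕ, Iic (n:ℝ)) = 0 := measure_iUnion_null h'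
  have hu : (⋃ n : ℕ, Iic (n:ℝ)) = univ := by
    refine eq_univ_of_forall fun x => ?_
    obtain ⟨n, hn⟩ := exists_nat_ge x
    exact mem_iUnion.2 ⟨n, hn⟩
  rw [hu, measure_univ] at this
  simp at this

lemma ex_Ici_pos : ∃ t₁ : ℝ, 0 < Q (Ici t₁) := by
  by_contra h
  push_neg at h
  have h' : ∀ n : ℕ, Q (Ici (-(n:ℝ))) = 0 := fun n => le_antisymm (h _) zero_le
  have : Q (⋃ n : ℕ, Ici (-(n:ℝ))) = 0 := measure_iUnion_null h'
  have hu : (⋃ n : ℕ, Ici (-(n:ℝ))) = univ := by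
    refine eq_univ_of_forall fun x => ?_
    obtain ⟨n, hn⟩ := exists_nat_ge (-x)
    exact mem_iUnion.2 ⟨n, by simpa using neg_le_neg hn⟩
  rw [hu, measure_univ] at this
  simp at this

include hm h0 hneg hpos hint in
lemma exists_Gfun_ge {α : ℝ} (hα : α ∈ Set.Ioo (0:ℝ) 1) :
    ∃ θ : ℝ, α ≤ Gfun ψ Q θ := by
  obtain ⟨t₀, ht₀⟩ := (ex_Iic_pos (Q := Q))
  set c1 : ℝ := -ψ (-1) with hc1def
  have hc1 : 0 < c1 := by have := hneg (-1) (by norm_num); simpa [hc1def] using this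
  set m : ℝ := c1 * (Q (Iic t₀)).toReal with hmdef
  have hm0 : 0 < m :=
    mul_pos hc1 (ENNReal.toReal_pos ht₀.ne' (measure_ne_top Q _))
  set ε : ℝ := (1 - α) * m / α with hεdef
  have hε : 0 < ε := by
    have := hα.1; have := hα.2
    apply div_pos (mul_pos (by linarith) hm0) hα.1
  obtain ⟨n, hn1, hn2⟩ : ∃ n : ℕ, t₀ + 1 ≤ (n:ℝ) ∧
      ∫ y in Ioi (n:ℝ), |ψ (y - (t₀+1))| ∂Q < ε := by
    have h1 : ∀ᶠ n : ℕ in atTop, t₀ + 1 ≤ (n:ℝ) := by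
      obtain ⟨k, hk⟩ := exists_nat_ge (t₀ + 1)
      filter_upwards [eventually_ge_atTop k] with n hn
      exact hk.trans (by exact_mod_cast hn)
    have h2 := (tendsto_order.1 (tail_right (Q := Q) (hint (t₀+1)))).2 ε hε
    exact (h1.and h2).exists
  set θ : ℝ := (n:ℝ) with hθdef
  -- lower bound on numerator
  have keyN : m ≤ ∫ y in Iic θ, |ψ (y - θ)| ∂Q := by
    have step1 : ∫ y in Iic t₀, |ψ (y - θ)| ∂Q ≤ ∫ y in Iic θ, |ψ (y - θ)| ∂Q := by
      refine setIntegral_mono_set ((hint θ).integrableOn)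
        (Eventually.of_forall fun y => abs_nonneg _) ?_
      exact HasSubset.Subset.eventuallyLE (Iic_subset_Iic.2 (by linarith))
    have step2 : ∫ y in Iic t₀, c1 ∂Q ≤ ∫ y in Iic t₀, |ψ (y - θ)| ∂Q := by
      refine setIntegral_mono_on
        (integrableOn_const (measure_ne_top _ _) (by simp)) ((hint θ).integrableOn)
        measurableSet_Iic (fun y hy => ?_)
      have h1 : y - θ ≤ -1 := by
        have : y ≤ t₀ := hy
        linarith
      have h2 : ψ (y - θ) ≤ ψ (-1) := hm h1
      calc c1 = -ψ (-1) := rfl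
        _ ≤ -ψ (y - θ) := by linarith
        _ ≤ |ψ (y - θ)| := neg_le_abs _
    have step3 : ∫ y in Iic t₀, c1 ∂Q = (Q (Iic t₀)).toReal * c1 := by
      rw [setIntegral_const]; simp [smul_eq_mul, Measure.real]
    calc m = (Q (Iic t₀)).toReal * c1 := by rw [hmdef]; ring
      _ = ∫ y in Iic t₀, c1 ∂Q := step3.symm
      _ ≤ ∫ y in Iic t₀, |ψ (y - θ)| ∂Q := step2
      _ ≤ _ := step1
  -- upper bound on the right tail
  have keyR : ∫ y in Ioi θ, |ψ (y - θ)| ∂Q ≤ ε := by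
    refine le_of_lt (lt_of_le_of_lt ?_ hn2)
    refine setIntegral_mono_on ((hint θ).integrableOn) ((hint (t₀+1)).integrableOn)
      measurableSet_Ioi (fun y hy => ?_)
    have hy' : θ < y := hy
    have h1 : 0 < y - θ := by linarith
    have h2 : ψ (y - θ) ≤ ψ (y - (t₀+1)) := hm (by linarith)
    calc |ψ (y - θ)| = ψ (y - θ) := abs_of_pos (hpos _ h1)
      _ ≤ ψ (y - (t₀+1)) := h2
      _ ≤ |ψ (y - (t₀+1))| := le_abs_self _
  have hsplit : ∫ y, |ψ (y - θ)| ∂Q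
      = (∫ y in Iic θ, |ψ (y - θ)| ∂Q) + ∫ y in Ioi θ, |ψ (y - θ)| ∂Q := by
    rw [← compl_Iic]
    exact (integral_add_compl measurableSet_Iic (hint θ)).symm
  have hRnn : 0 ≤ ∫ y in Ioi θ, |ψ (y - θ)| ∂Q :=
    setIntegral_nonneg measurableSet_Ioi fun y _ => abs_nonneg _
  have hDpos : 0 < ∫ y, |ψ (y - θ)| ∂Q := by
    rw [hsplit]; linarith
  refine ⟨θ, ?_⟩
  rw [Gfun_eq, le_div_iff₀ hDpos, hsplit]
  have e1 : α * ε = (1 - α) * m := by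
    rw [hεdef]; field_simp
    exact mul_div_cancel_left₀ _ (ne_of_gt hα.1)
  nlinarith [mul_le_mul_of_nonneg_left keyR (le_of_lt hα.1),
    mul_le_mul_of_nonneg_left keyN (by linarith [hα.2] : (0:ℝ) ≤ 1 - α)]

include hm h0 hneg hpos hint in
lemma bddBelow_Gset {α : ℝ} (hα : α ∈ Set.Ioo (0:ℝ) 1) :
    BddBelow {θ : ℝ | α ≤ Gfun ψ Q θ} := by
  obtain ⟨t₁, ht₁⟩ := (ex_Ici_pos (Q := Q))
  set m' : ℝ := ψ 1 * (Q (Ici t₁)).toReal with hm'def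
  have hm'0 : 0 < m' :=
    mul_pos (hpos 1 one_pos) (ENNReal.toReal_pos ht₁.ne' (measure_ne_top Q _))
  obtain ⟨n, hn1, hn2⟩ : ∃ n : ℕ, -(n:ℝ) ≤ t₁ - 1 ∧
      ∫ y in Iic (-(n:ℝ)), |ψ (y - (t₁-1))| ∂Q < α * m' := by
    have h1 : ∀ᶠ n : ℕ in atTop, -(n:ℝ) ≤ t₁ - 1 := by
      obtain ⟨k, hk⟩ := exists_nat_ge (-(t₁ - 1))
      filter_upwards [eventually_ge_atTop k] with n hn
      have : -(t₁-1) ≤ (n:ℝ) := hk.trans (by exact_mod_cast hn)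
      linarith
    have h2 := (tendsto_order.1 (tail_left (Q := Q) (hint (t₁-1)))).2 _
      (mul_pos hα.1 hm'0)
    exact (h1.and h2).exists
  refine ⟨-(n:ℝ), fun θ hθ => ?_⟩
  by_contra hcon
  push_neg at hcon
  have hθle : θ ≤ -(n:ℝ) := le_of_lt hcon
  -- D lower bound
  have keyD : m' ≤ ∫ y, |ψ (y - θ)| ∂Q := by
    have step2 : ∫ y in Ici t₁, ψ 1 ∂Q ≤ ∫ y in Ici t₁, |ψ (y - θ)| ∂Q := by
      refine setIntegral_mono_on
        (integrableOn_const (measure_ne_top _ _) (by simp)) ((hint θ).integrableOn)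
        measurableSet_Ici (fun y hy => ?_)
      have h1 : (1:ℝ) ≤ y - θ := by
        have : t₁ ≤ y := hy
        linarith
      exact (hm h1).trans (le_abs_self _)
    have step3 : ∫ y in Ici t₁, ψ 1 ∂Q = (Q (Ici t₁)).toReal * ψ 1 := by
      rw [setIntegral_const]; simp [smul_eq_mul, Measure.real]
    have step4 : ∫ y in Ici t₁, |ψ (y - θ)| ∂Q ≤ ∫ y, |ψ (y - θ)| ∂Q :=
      setIntegral_le_integral (hint θ) (Eventually.of_forall fun y => abs_nonneg _)
    calc m' = (Q (Ici t₁)).toReal * ψ 1 := by rw [hm'def]; ring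
      _ = ∫ y in Ici t₁, ψ 1 ∂Q := step3.symm
      _ ≤ ∫ y in Ici t₁, |ψ (y - θ)| ∂Q := step2
      _ ≤ _ := step4
  -- N upper bound
  have keyN : ∫ y in Iic θ, |ψ (y - θ)| ∂Q < α * m' := by
    refine lt_of_le_of_lt ?_ hn2
    have step1 : ∫ y in Iic θ, |ψ (y - θ)| ∂Q ≤ ∫ y in Iic θ, |ψ (y - (t₁-1))| ∂Q := by
      refine setIntegral_mono_on ((hint θ).integrableOn) ((hint (t₁-1)).integrableOn)
        measurableSet_Iic (fun y hy => ?_)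
      have hy' : y ≤ θ := hy
      have h1 : ψ (y - θ) ≤ ψ 0 := hm (by linarith)
      have h2 : ψ (y - θ) ≥ ψ (y - (t₁-1)) := hm (by linarith)
      calc |ψ (y - θ)| = -ψ (y - θ) := abs_of_nonpos (h1.trans h0)
        _ ≤ -ψ (y - (t₁-1)) := by linarith
        _ ≤ |ψ (y - (t₁-1))| := neg_le_abs _
    refine step1.trans ?_
    refine setIntegral_mono_set ((hint (t₁-1)).integrableOn)
      (Eventually.of_forall fun y => abs_nonneg _) ?_
    exact HasSubset.Subset.eventuallyLE (Iic_subset_Iic.2 hθle)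
  have hDpos : 0 < ∫ y, |ψ (y - θ)| ∂Q := lt_of_lt_of_le hm'0 keyD
  have : Gfun ψ Q θ < α := by
    rw [Gfun_eq, div_lt_iff₀ hDpos]
    calc ∫ y in Iic θ, |ψ (y - θ)| ∂Q < α * m' := keyN
      _ ≤ α * ∫ y, |ψ (y - θ)| ∂Q := by
        exact mul_le_mul_of_nonneg_left keyD (le_of_lt hα.1)
  exact absurd hθ (by simp only [Set.mem_setOf_eq]; linarith)

include hm h0 hneg hpos hint in
lemma sInf_gt_of_null {α : ℝ} (hα : α ∈ Set.Ioo (0:ℝ) 1) {c : ℝ} (hQc : Q (Iic c) = 0)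
    (hS : {θ : ℝ | α ≤ Gfun ψ Q θ}.Nonempty) :
    c < sInf {θ : ℝ | α ≤ Gfun ψ Q θ} := by
  -- Q (Ioi c) = 1
  have hIoi : Q (Ioi c) = 1 := by
    have := measure_compl (μ := Q) (s := Iic c) measurableSet_Iic (measure_ne_top Q _)
    rw [compl_Iic, hQc, measure_univ] at this
    simpa using this
  -- find t₁ > c with positive mass above
  obtain ⟨t₁, ht₁c, ht₁⟩ : ∃ t₁ : ℝ, c < t₁ ∧ 0 < Q (Ici t₁) := by
    by_contra h
    push_neg at h
    have h' : ∀ n : ℕ, Q (Ici (c + 1/((n:ℝ)+1))) = 0 := by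
      intro n
      have hpos' : (0:ℝ) < 1/((n:ℝ)+1) := by positivity
      exact le_antisymm (h _ (by linarith)) zero_le
    have hnull : Q (⋃ n : ℕ, Ici (c + 1/((n:ℝ)+1))) = 0 := measure_iUnion_null h'
    have hu : (⋃ n : ℕ, Ici (c + 1/((n:ℝ)+1))) = Ioi c := by
      apply Set.eq_of_subset_of_subset
      · refine iUnion_subset fun n x hx => ?_
        have : (0:ℝ) < 1/((n:ℝ)+1) := by positivity
        have hx' : c + 1/((n:ℝ)+1) ≤ x := hx
        exact lt_of_lt_of_le (by linarith) hx'
      · intro x hx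
        obtain ⟨k, hk⟩ := exists_nat_one_div_lt (show (0:ℝ) < x - c from sub_pos.2 hx)
        exact mem_iUnion.2 ⟨k, by simp only [mem_Ici]; linarith⟩
    rw [hu, hIoi] at hnull
    simp at hnull
  set δ : ℝ := (t₁ - c)/2 with hδdef
  have hδ : 0 < δ := by rw [hδdef]; linarith
  set m'' : ℝ := ψ δ * (Q (Ici t₁)).toReal with hm''def
  have hm''0 : 0 < m'' :=
    mul_pos (hpos δ hδ) (ENNReal.toReal_pos ht₁.ne' (measure_ne_top Q _))
  set C : ℝ := -ψ (-δ) with hCdef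
  have hC : 0 < C := by
    have := hneg (-δ) (by linarith); rw [hCdef]; linarith
  -- small Ioc mass
  have htend : Tendsto (fun n : ℕ => Q (Ioc c (c + 1/((n:ℝ)+1)))) atTop (𝓝 0) := by
    have h1 : Tendsto (fun n : ℕ => Q (Ioc c (c + 1/((n:ℝ)+1)))) atTop
        (𝓝 (Q (⋂ n : ℕ, Ioc c (c + 1/((n:ℝ)+1))))) := by
      refine tendsto_measure_iInter_atTop (fun n => (measurableSet_Ioc).nullMeasurableSet) ?_
        ⟨0, measure_ne_top _ _⟩
      intro i j hij
      refine Ioc_subset_Ioc_right ?_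
      have : 1/((j:ℝ)+1) ≤ 1/((i:ℝ)+1) := by
        apply one_div_le_one_div_of_le (by positivity)
        exact_mod_cast by linarith [hij]
      linarith
    have h2 : (⋂ n : ℕ, Ioc c (c + 1/((n:ℝ)+1))) = ∅ := by
      refine eq_empty_iff_forall_notMem.2 fun x hx => ?_
      have hx1 : c < x := (mem_iInter.1 hx 0).1
      obtain ⟨n, hn⟩ := exists_nat_one_div_lt (show (0:ℝ) < x - c by linarith)
      have := (mem_iInter.1 hx n).2
      linarith
    rw [h2] at h1
    simpa using h1
  obtain ⟨n, hn⟩ : ∃ n : ℕ, Q (Ioc c (c + 1/((n:ℝ)+1))) < ENNReal.ofReal (α * m'' / C) := by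
    have hp : (0:ℝ≥0∞) < ENNReal.ofReal (α * m'' / C) := by
      rw [ENNReal.ofReal_pos]
      exact div_pos (mul_pos hα.1 hm''0) hC
    exact ((tendsto_order.1 htend).2 _ hp).exists
  set η : ℝ := min (1/((n:ℝ)+1)) δ with hηdef
  have hη : 0 < η := lt_min (by positivity) hδ
  -- every θ in the set is ≥ c + η
  refine lt_of_lt_of_le (show c < c + η by linarith) (le_csInf hS ?_)
  intro θ hθ
  by_contra hcon
  push_neg at hcon
  have hGlt : Gfun ψ Q θ < α := by
    rcases le_or_gt θ c with hle | hgt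
    · -- numerator vanishes
      have hN : ∫ y in Iic θ, |ψ (y - θ)| ∂Q = 0 := by
        have h' : Q (Iic θ) = 0 := measure_mono_null (Iic_subset_Iic.2 hle) hQc
        rw [Measure.restrict_eq_zero.2 h']
        exact integral_zero_measure _
      rw [Gfun_eq, hN, zero_div]
      exact hα.1
    · -- c < θ < c + η
      have hθδ : θ ≤ c + δ := le_of_lt (lt_of_lt_of_le hcon (by
        have : η ≤ δ := min_le_right _ _
        linarith))
      have keyD : m'' ≤ ∫ y, |ψ (y - θ)| ∂Q := by
        have step2 : ∫ y in Ici t₁, ψ δ ∂Q ≤ ∫ y in Ici t₁, |ψ (y - θ)| ∂Q := by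
          refine setIntegral_mono_on
            (integrableOn_const (measure_ne_top _ _) (by simp)) ((hint θ).integrableOn)
            measurableSet_Ici (fun y hy => ?_)
          have h1 : δ ≤ y - θ := by
            have : t₁ ≤ y := hy
            have : t₁ = c + 2*δ := by rw [hδdef]; ring
            linarith
          exact (hm h1).trans (le_abs_self _)
        have step3 : ∫ y in Ici t₁, ψ δ ∂Q = (Q (Ici t₁)).toReal * ψ δ := by
          rw [setIntegral_const]; simp [smul_eq_mul, Measure.real]
        have step4 : ∫ y in Ici t₁, |ψ (y - θ)| ∂Q ≤ ∫ y, |ψ (y - θ)| ∂Q :=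
          setIntegral_le_integral (hint θ) (Eventually.of_forall fun y => abs_nonneg _)
        calc m'' = (Q (Ici t₁)).toReal * ψ δ := by rw [hm''def]; ring
          _ = ∫ y in Ici t₁, ψ δ ∂Q := step3.symm
          _ ≤ ∫ y in Ici t₁, |ψ (y - θ)| ∂Q := step2
          _ ≤ _ := step4
      have keyN : ∫ y in Iic θ, |ψ (y - θ)| ∂Q < α * m'' := by
        have hsets : (Iic θ : Set ℝ) =ᵐ[Q] (Ioc c θ : Set ℝ) := by
          have hae : ∀ᵐ y ∂Q, y ∉ Iic c := (measure_eq_zero_iff_ae_notMem).1 hQc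
          refine Filter.eventuallyEq_set.2 ?_
          filter_upwards [hae] with y hy
          simp only [mem_Iic, mem_Ioc, mem_Iic] at *
          exact ⟨fun h => ⟨lt_of_not_ge hy, h⟩, fun h => h.2⟩
        have heq : ∫ y in Iic θ, |ψ (y - θ)| ∂Q = ∫ y in Ioc c θ, |ψ (y - θ)| ∂Q :=
          setIntegral_congr_set hsets
        have step1 : ∫ y in Ioc c θ, |ψ (y - θ)| ∂Q ≤ ∫ y in Ioc c θ, C ∂Q := by
          refine setIntegral_mono_on ((hint θ).integrableOn)
            (integrableOn_const (measure_ne_top _ _) (by simp))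
            measurableSet_Ioc (fun y hy => ?_)
          have h1 : ψ (y - θ) ≤ ψ 0 := hm (by linarith [hy.2])
          have h2 : ψ (-δ) ≤ ψ (y - θ) := hm (by linarith [hy.1])
          calc |ψ (y - θ)| = -ψ (y - θ) := abs_of_nonpos (h1.trans h0)
            _ ≤ -ψ (-δ) := by linarith
            _ = C := rfl
        have step2 : ∫ y in Ioc c θ, C ∂Q = (Q (Ioc c θ)).toReal * C := by
          rw [setIntegral_const]; simp [smul_eq_mul, Measure.real]
        have step3 : (Q (Ioc c θ)).toReal ≤ (Q (Ioc c (c + 1/((n:ℝ)+1)))).toReal := by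
          refine ENNReal.toReal_mono (measure_ne_top _ _) (measure_mono ?_)
          refine Ioc_subset_Ioc_right ?_
          have : η ≤ 1/((n:ℝ)+1) := min_le_left _ _
          linarith
        have step4 : (Q (Ioc c (c + 1/((n:ℝ)+1)))).toReal < α * m'' / C :=
          (ENNReal.lt_ofReal_iff_toReal_lt (measure_ne_top _ _)).1 hn
        calc ∫ y in Iic θ, |ψ (y - θ)| ∂Q = ∫ y in Ioc c θ, |ψ (y - θ)| ∂Q := heq
          _ ≤ (Q (Ioc c θ)).toReal * C := by rw [← step2]; exact step1
          _ ≤ (Q (Ioc c (c + 1/((n:ℝ)+1)))).toReal * C :=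
            mul_le_mul_of_nonneg_right step3 (le_of_lt hC)
          _ < (α * m'' / C) * C := mul_lt_mul_of_pos_right step4 hC
          _ = α * m'' := by field_simp
      have hDpos : 0 < ∫ y, |ψ (y - θ)| ∂Q := lt_of_lt_of_le hm''0 keyD
      rw [Gfun_eq, div_lt_iff₀ hDpos]
      calc ∫ y in Iic θ, |ψ (y - θ)| ∂Q < α * m'' := keyN
        _ ≤ α * ∫ y, |ψ (y - θ)| ∂Q := mul_le_mul_of_nonneg_left keyD (le_of_lt hα.1)
  exact absurd hθ (by simp only [Set.mem_setOf_eq]; linarith)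

end Univ

def phiAux (r : ℝ) (x : ℝ) : ℝ :=
  if x ≤ 0 then -(r * (-x) ^ (r-1)) else r * x ^ (r-1)

lemma leftDeriv_unique {f : ℝ → ℝ} {x a b : ℝ}
    (ha : HasDerivWithinAt f a (Set.Iio x) x) (hb : HasDerivWithinAt f b (Set.Iio x) x) :
    a = b := by
  have ha' := (hasDerivWithinAt_iff_tendsto_slope).1 ha
  have hb' := (hasDerivWithinAt_iff_tendsto_slope).1 hb
  rw [diff_singleton_eq_self (by simp)] at ha' hb'
  exact tendsto_nhds_unique ha' hb'

lemma hasDerivWithinAt_abs_rpow {r : ℝ} (hr : 1 ≤ r) (x : ℝ) :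
    HasDerivWithinAt (fun t : ℝ => |t| ^ r) (phiAux r x) (Set.Iio x) x := by
  rcases le_or_gt x 0 with hx | hx
  · have h1 : HasDerivAt (fun s : ℝ => s ^ r) (r * (-x) ^ (r-1)) (-x) :=
      Real.hasDerivAt_rpow_const (Or.inr hr)
    have h2 : HasDerivAt (fun t : ℝ => (-t) ^ r) (r * (-x) ^ (r-1) * (-1)) x :=
      h1.comp x (hasDerivAt_neg x)
    have h3 : HasDerivWithinAt (fun t : ℝ => (-t) ^ r) (phiAux r x) (Set.Iio x) x := by
      have : phiAux r x = r * (-x) ^ (r-1) * (-1) := by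
        simp only [phiAux, if_pos hx]; ring
      rw [this]
      exact h2.hasDerivWithinAt
    refine h3.congr (fun y hy => ?_) ?_
    · have : y < x := hy
      rw [abs_of_nonpos (by linarith)]
    · rw [abs_of_nonpos hx]
  · have h1 : HasDerivAt (fun s : ℝ => s ^ r) (r * x ^ (r-1)) x :=
      Real.hasDerivAt_rpow_const (Or.inl (ne_of_gt hx))
    have h3 : HasDerivWithinAt (fun t : ℝ => t ^ r) (phiAux r x) (Set.Iio x) x := by
      have : phiAux r x = r * x ^ (r-1) := by
        simp [phiAux, not_le.2 hx]
      rw [this]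
      exact h1.hasDerivWithinAt
    refine h3.congr_of_eventuallyEq ?_ ?_
    · have hmem : Set.Ioi (0:ℝ) ∈ 𝓝[Set.Iio x] x := nhdsWithin_le_nhds (Ioi_mem_nhds hx)
      filter_upwards [hmem] with y (hy : 0 < y)
      rw [abs_of_pos hy]
    · rw [abs_of_pos hx]

lemma psi_eq_phiAux {r : ℝ} (hr : 1 ≤ r) {ψ : ℝ → ℝ}
    (hψ : IsLeftDeriv (fun t : ℝ => |t| ^ r) ψ) : ∀ x, ψ x = phiAux r x :=
  fun x => leftDeriv_unique (hψ x) (hasDerivWithinAt_abs_rpow hr x)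

lemma phiAux_smul {r : ℝ} (hr : 1 ≤ r) {s : ℝ} (hs : 0 < s) (t : ℝ) :
    phiAux r (s * t) = s ^ (r-1) * phiAux r t := by
  rcases le_or_gt t 0 with ht | ht
  · have h1 : s * t ≤ 0 := mul_nonpos_iff.2 (Or.inl ⟨hs.le, ht⟩)
    have h2 : -(s * t) = s * (-t) := by ring
    rw [phiAux, phiAux, if_pos h1, if_pos ht, h2,
      Real.mul_rpow hs.le (by linarith : (0:ℝ) ≤ -t)]
    ring
  · have h1 : ¬ (s * t ≤ 0) := not_le.2 (mul_pos hs ht)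
    rw [phiAux, phiAux, if_neg h1, if_neg (not_le.2 ht),
      Real.mul_rpow hs.le ht.le]
    ring

lemma Gfun_map_affine {r : ℝ} (hr : 1 ≤ r) {ψ : ℝ → ℝ} (hψφ : ∀ x, ψ x = phiAux r x)
    (hmono : Monotone ψ) {s : ℝ} (hs : 0 < s) (m : ℝ) (Q : Measure ℝ) (θ : ℝ) :
    Gfun ψ (Q.map (fun t => s * t + m)) (s * θ + m) = Gfun ψ Q θ := by
  have hT : Measurable fun t : ℝ => s * t + m :=
    (measurable_const.mul measurable_id).add measurable_const
  have hsr : (0:ℝ) < s ^ (r-1) := Real.rpow_pos_of_pos hs _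
  have habs : ∀ x : ℝ, |ψ (s * x)| = s ^ (r-1) * |ψ x| := by
    intro x
    rw [hψφ, hψφ, phiAux_smul hr hs, abs_mul, abs_of_pos hsr]
  have hmeas1 : Measurable fun y : ℝ =>
      |ψ (y - (s * θ + m))| * (if y ≤ s * θ + m then 1 else 0) := by
    refine Measurable.mul ?_ ?_
    · exact (hmono.measurable.comp (measurable_id.sub_const _)).abs
    · exact Measurable.ite measurableSet_Iic measurable_const measurable_const
  have hmeas2 : Measurable fun y : ℝ => |ψ (y - (s * θ + m))| :=
    (hmono.measurable.comp (measurable_id.sub_const _)).abs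
  rw [Gfun, integral_map hT.aemeasurable hmeas1.aestronglyMeasurable,
    integral_map hT.aemeasurable hmeas2.aestronglyMeasurable]
  have e1 : ∀ x : ℝ, |ψ (s * x + m - (s * θ + m))| = s ^ (r-1) * |ψ (x - θ)| := by
    intro x
    have : s * x + m - (s * θ + m) = s * (x - θ) := by ring
    rw [this, habs]
  have e2 : ∀ x : ℝ, (if s * x + m ≤ s * θ + m then (1:ℝ) else 0) = (if x ≤ θ then 1 else 0) := by
    intro x
    have : s * x + m ≤ s * θ + m ↔ x ≤ θ := by
      constructor
      · intro h; nlinarith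
      · intro h; nlinarith
    simp [this]
  have hnum : ∫ x, |ψ (s * x + m - (s * θ + m))| * (if s * x + m ≤ s * θ + m then (1:ℝ) else 0) ∂Q
      = s ^ (r-1) * ∫ x, |ψ (x - θ)| * (if x ≤ θ then 1 else 0) ∂Q := by
    rw [← integral_const_mul]
    congr 1
    funext x
    rw [e1, e2]
    ring
  have hden : ∫ x, |ψ (s * x + m - (s * θ + m))| ∂Q = s ^ (r-1) * ∫ x, |ψ (x - θ)| ∂Q := by
    rw [← integral_const_mul]
    congr 1
    funext x
    rw [e1]
  rw [hnum, hden, Gfun, mul_div_mul_left _ _ (ne_of_gt hsr)]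

lemma MQuant_map_affine {r : ℝ} (hr : 1 ≤ r) {ψ : ℝ → ℝ} (hψφ : ∀ x, ψ x = phiAux r x)
    (hmono : Monotone ψ) {s : ℝ} (hs : 0 < s) (m : ℝ) (Q : Measure ℝ) {α : ℝ}
    (hne : {θ : ℝ | α ≤ Gfun ψ Q θ}.Nonempty) (hbdd : BddBelow {θ : ℝ | α ≤ Gfun ψ Q θ}) :
    MQuant ψ (Q.map (fun t => s * t + m)) α = s * MQuant ψ Q α + m := by
  have hSimg : {θ' : ℝ | α ≤ Gfun ψ (Q.map (fun t => s * t + m)) θ'}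
      = (fun θ => s * θ + m) '' {θ : ℝ | α ≤ Gfun ψ Q θ} := by
    ext θ'
    simp only [Set.mem_setOf_eq, Set.mem_image]
    constructor
    · intro h
      refine ⟨(θ' - m) / s, ?_, by field_simp; ring⟩
      have : s * ((θ' - m) / s) + m = θ' := by field_simp; ring
      rwa [← this, Gfun_map_affine hr hψφ hmono hs] at h
    · rintro ⟨θ, hθ, rfl⟩
      rwa [Gfun_map_affine hr hψφ hmono hs]
  have hmonof : Monotone fun θ : ℝ => s * θ + m := fun a b hab => by
    have := mul_le_mul_of_nonneg_left hab hs.le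
    dsimp only
    linarith
  have hcont : ContinuousAt (fun θ : ℝ => s * θ + m) (sInf {θ : ℝ | α ≤ Gfun ψ Q θ}) :=
    ((continuous_const.mul continuous_id).add continuous_const).continuousAt
  rw [MQuant, MQuant, hSimg, ← Monotone.map_csInf_of_continuousAt hcont hmonof hne hbdd]

theorem stmt_6 {d : ℕ} (hd : 0 < d) (ρ ψ : ℝ → ℝ) (hρ : LossClass ρ)
    (hψ : IsLeftDeriv ρ ψ)
    (P : Measure (EuclideanSpace ℝ (Fin d))) [IsProbabilityMeasure P]
    (hP1 : ∀ u : EuclideanSpace ℝ (Fin d), ‖u‖ = 1 → ∀ c : ℝ, P {z | ⟪u, z⟫ = c} < 1)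
    (hP2 : ∀ u : EuclideanSpace ℝ (Fin d), ‖u‖ = 1 → ∀ θ : ℝ,
      Integrable (fun t => |ψ (t - θ)|) (dirProj P u))
    (α : ℝ) (hα : α ∈ Set.Ioo (0 : ℝ) 1) :
    Convex ℝ (MRegion ψ P α) ∧ IsCompact (MRegion ψ P α) ∧
    MRegion ψ P α ⊆ Csupport P ∧
    ((∃ r : ℝ, 1 ≤ r ∧ ρ = fun t : ℝ => |t| ^ r) →
      ∀ (A : EuclideanSpace ℝ (Fin d) ≃L[ℝ] EuclideanSpace ℝ (Fin d))
        (b : EuclideanSpace ℝ (Fin d)),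
        MRegion ψ (P.map (fun z => A z + b)) α = (fun z => A z + b) '' MRegion ψ P α) := by
  set E := EuclideanSpace ℝ (Fin d)
  have hmono : Monotone ψ := psi_mono hρ.1 hψ
  have h0 : ψ 0 ≤ 0 := psi_zero hρ hψ
  have hneg : ∀ t < 0, ψ t < 0 := fun t ht => psi_neg hρ hψ ht
  have hpos : ∀ t > 0, 0 < ψ t := fun t ht => psi_pos hρ hψ ht
  have hprojmeas : ∀ u : E, Measurable fun z : E => ⟪u, z⟫ := fun u =>
    (innerSL ℝ u).continuous.measurable
  have hprob : ∀ u : E, IsProbabilityMeasure (dirProj P u) := fun u =>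
    Measure.isProbabilityMeasure_map (hprojmeas u).aemeasurable
  -- membership characterization
  have hmem : ∀ (z : E), z ∈ MRegion ψ P α ↔
      ∀ u : E, ‖u‖ = 1 → MQuant ψ (dirProj P u) α ≤ ⟪u, z⟫ := by
    intro z
    simp only [MRegion, Set.mem_iInter, MHalf, Set.mem_setOf_eq]
    exact Iff.rfl
  refine ⟨?_, ?_, ?_, ?_⟩
  · -- convex
    refine convex_iInter fun u => convex_iInter fun hu => ?_
    intro x hx y hy a c ha hc hac
    simp only [MHalf, Set.mem_setOf_eq] at *
    have e : ⟪u, a • x + c • y⟫ = a * ⟪u, x⟫ + c * ⟪u, y⟫ := by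
      rw [inner_add_right, real_inner_smul_right, real_inner_smul_right]
    rw [e]
    have h1 := mul_le_mul_of_nonneg_left hx ha
    have h2 := mul_le_mul_of_nonneg_left hy hc
    have h3 : MQuant ψ (dirProj P u) α
        = a * MQuant ψ (dirProj P u) α + c * MQuant ψ (dirProj P u) α := by
      rw [← add_mul, hac, one_mul]
    linarith
  · -- compact
    have hclosed : IsClosed (MRegion ψ P α) := by
      refine isClosed_iInter fun u => isClosed_iInter fun hu => ?_
      exact isClosed_le continuous_const (innerSL ℝ u).continuous
    refine Metric.isCompact_iff_isClosed_bounded.2 ⟨hclosed, ?_⟩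
    rw [isBounded_iff_forall_norm_le]
    set e : Fin d → E := fun i => EuclideanSpace.single i (1:ℝ) with he
    have hnorme : ∀ i, ‖e i‖ = 1 := fun i => by
      rw [he]
      rw [EuclideanSpace.norm_single]
      norm_num
    have hinner : ∀ i (z : E), ⟪e i, z⟫ = z i := fun i z => by
      rw [he]
      rw [EuclideanSpace.inner_single_left]
      simp
    set Ci : Fin d → ℝ := fun i =>
      max |MQuant ψ (dirProj P (e i)) α| |MQuant ψ (dirProj P (-e i)) α| with hCi
    refine ⟨Real.sqrt (∑ i, (Ci i)^2), fun z hz => ?_⟩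
    have hzc : ∀ i, |z i| ≤ Ci i := by
      intro i
      have h1 : MQuant ψ (dirProj P (e i)) α ≤ z i := by
        have := (hmem z).1 hz (e i) (hnorme i)
        rwa [hinner] at this
      have h2 : MQuant ψ (dirProj P (-e i)) α ≤ -(z i) := by
        have := (hmem z).1 hz (-e i) (by rw [norm_neg]; exact hnorme i)
        rwa [inner_neg_left, hinner] at this
      rw [abs_le]
      constructor
      · have : -(Ci i) ≤ MQuant ψ (dirProj P (e i)) α := by
          rw [hCi]
          have := neg_abs_le (MQuant ψ (dirProj P (e i)) α)
          have h3 := le_max_left |MQuant ψ (dirProj P (e i)) α| |MQuant ψ (dirProj P (-e i)) α|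
          linarith
        linarith
      · have : MQuant ψ (dirProj P (-e i)) α ≥ -(Ci i) := by
          rw [hCi]
          have := neg_abs_le (MQuant ψ (dirProj P (-e i)) α)
          have h3 := le_max_right |MQuant ψ (dirProj P (e i)) α| |MQuant ψ (dirProj P (-e i)) α|
          linarith
        linarith
    rw [EuclideanSpace.norm_eq]
    refine Real.sqrt_le_sqrt (Finset.sum_le_sum fun i _ => ?_)
    rw [Real.norm_eq_abs]
    have h1 : 0 ≤ |z i| := abs_nonneg _
    nlinarith [hzc i]
  · -- C-support
    intro z hz u hu
    haveI := hprob u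
    have hint := hP2 u hu
    set c : ℝ := ⟪u, z⟫ with hc
    have hQP : dirProj P u (Iic c) = P {y : E | ⟪u, y⟫ ≤ c} := by
      rw [dirProj, Measure.map_apply (hprojmeas u) measurableSet_Iic]
      rfl
    rw [← hQP]
    rcases eq_or_lt_of_le (zero_le : 0 ≤ dirProj P u (Iic c)) with hzero | hp
    · exfalso
      have hS : {θ : ℝ | α ≤ Gfun ψ (dirProj P u) θ}.Nonempty :=
        exists_Gfun_ge hmono h0 hneg hpos hint hα
      have hlt : c < MQuant ψ (dirProj P u) α :=
        sInf_gt_of_null hmono h0 hneg hpos hint hα hzero.symm hS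
      have hle : MQuant ψ (dirProj P u) α ≤ c := (hmem z).1 hz u hu
      linarith
    · exact hp
  · -- equivariance
    rintro ⟨r, hr, rfl⟩ A b
    have hψφ : ∀ x, ψ x = phiAux r x := psi_eq_phiAux hr hψ
    set T : E → E := fun z => (A : E ≃L[ℝ] E) z + b with hT
    have hTcont : Continuous T := ((A : E →L[ℝ] E).continuous).add continuous_const
    have hTmeas : Measurable T := hTcont.measurable
    set Aad : E →L[ℝ] E := ContinuousLinearMap.adjoint (A : E →L[ℝ] E) with hAad
    set Bad : E →L[ℝ] E := ContinuousLinearMap.adjoint (A.symm : E →L[ℝ] E) with hBad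
    have hAB : ∀ x : E, Aad (Bad x) = x := by
      intro x
      refine ext_inner_right ℝ fun y => ?_
      rw [ContinuousLinearMap.adjoint_inner_left, ContinuousLinearMap.adjoint_inner_left]
      simp
    -- core computation
    have core : ∀ u : E, ‖u‖ = 1 → Aad u ≠ 0 ∧
        (∀ z : E, MQuant ψ (dirProj (P.map T) u) α ≤ ⟪u, T z⟫ ↔
          MQuant ψ (dirProj P (‖Aad u‖⁻¹ • Aad u)) α ≤ ⟪‖Aad u‖⁻¹ • Aad u, z⟫) := by
      intro u hu
      have hwne : Aad u ≠ 0 := by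
        intro h
        have h1 : ⟪Aad u, (A.symm : E ≃L[ℝ] E) u⟫ = ⟪u, u⟫ := by
          rw [hAad, ContinuousLinearMap.adjoint_inner_left]
          simp
        rw [h, inner_zero_left] at h1
        rw [real_inner_self_eq_norm_sq, hu] at h1
        norm_num at h1
      refine ⟨hwne, ?_⟩
      set w : E := Aad u with hw
      set s : ℝ := ‖w‖ with hs
      have hs0 : 0 < s := norm_pos_iff.2 hwne
      set v : E := s⁻¹ • w with hv
      have hvnorm : ‖v‖ = 1 := by
        rw [hv, norm_smul, norm_inv, norm_norm, ← hs, inv_mul_cancel₀ (ne_of_gt hs0)]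
      set m : ℝ := ⟪u, b⟫ with hm
      haveI := hprob v
      have hintv := hP2 v hvnorm
      have haff : Measurable fun t : ℝ => s * t + m := by fun_prop
      have hproj : dirProj (P.map T) u = (dirProj P v).map (fun t => s * t + m) := by
        rw [dirProj, dirProj, Measure.map_map (hprojmeas u) hTmeas,
          Measure.map_map haff (hprojmeas v)]
        congr 1
        funext z
        show ⟪u, T z⟫ = s * ⟪v, z⟫ + m
        rw [hT]
        show ⟪u, (A : E ≃L[ℝ] E) z + b⟫ = s * ⟪v, z⟫ + m
        rw [inner_add_right]
        have h1 : ⟪u, (A : E ≃L[ℝ] E) z⟫ = ⟪w, z⟫ := by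
          rw [hw, hAad, ContinuousLinearMap.adjoint_inner_left]
          rfl
        have h2 : ⟪v, z⟫ = s⁻¹ * ⟪w, z⟫ := by
          rw [hv, real_inner_smul_left]
        rw [h1, h2, hm]
        field_simp
      have hquant : MQuant ψ (dirProj (P.map T) u) α
          = s * MQuant ψ (dirProj P v) α + m := by
        rw [hproj]
        exact MQuant_map_affine hr hψφ hmono hs0 m _
          (exists_Gfun_ge hmono h0 hneg hpos hintv hα)
          (bddBelow_Gset hmono h0 hneg hpos hintv hα)
      intro z
      have hTz : ⟪u, T z⟫ = s * ⟪v, z⟫ + m := by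
        rw [hT]
        show ⟪u, (A : E ≃L[ℝ] E) z + b⟫ = s * ⟪v, z⟫ + m
        rw [inner_add_right]
        have h1 : ⟪u, (A : E ≃L[ℝ] E) z⟫ = ⟪w, z⟫ := by
          rw [hw, hAad, ContinuousLinearMap.adjoint_inner_left]
          rfl
        have h2 : ⟪v, z⟫ = s⁻¹ * ⟪w, z⟫ := by
          rw [hv, real_inner_smul_left]
        rw [h1, h2, hm]
        field_simp
      rw [hquant, hTz]
      constructor
      · intro h
        have := sub_le_sub_right h m
        simp only [add_sub_cancel_right] at this
        exact le_of_mul_le_mul_left (by linarith) hs0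
      · intro h
        have := mul_le_mul_of_nonneg_left h hs0.le
        linarith
    -- surjectivity of direction correspondence
    have surj : ∀ v₀ : E, ‖v₀‖ = 1 → ∃ u : E, ‖u‖ = 1 ∧
        ‖Aad u‖⁻¹ • Aad u = v₀ := by
      intro v₀ hv₀
      have hBne : Bad v₀ ≠ 0 := by
        intro h
        have := hAB v₀
        rw [h, map_zero] at this
        rw [← this] at hv₀
        simp at hv₀
      set u : E := ‖Bad v₀‖⁻¹ • Bad v₀ with hu
      have hBpos : 0 < ‖Bad v₀‖ := norm_pos_iff.2 hBne
      refine ⟨u, ?_, ?_⟩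
      · rw [hu, norm_smul, norm_inv, norm_norm, inv_mul_cancel₀ (ne_of_gt hBpos)]
      · have h1 : Aad u = ‖Bad v₀‖⁻¹ • v₀ := by
          rw [hu, _root_.map_smul, hAB]
        rw [h1, norm_smul, norm_inv, norm_norm, hv₀, mul_one, inv_inv, smul_smul,
          mul_inv_cancel₀ (ne_of_gt hBpos), one_smul]
    have hmem' : ∀ (z : E), z ∈ MRegion ψ (P.map T) α ↔
        ∀ u : E, ‖u‖ = 1 → MQuant ψ (dirProj (P.map T) u) α ≤ ⟪u, z⟫ := by
      intro z
      simp only [MRegion, Set.mem_iInter, MHalf, Set.mem_setOf_eq]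
      exact Iff.rfl
    show MRegion ψ (P.map T) α = T '' MRegion ψ P α
    ext z'
    constructor
    · intro hz'
      refine ⟨(A.symm : E ≃L[ℝ] E) (z' - b), ?_, ?_⟩
      swap
      · show T ((A.symm : E ≃L[ℝ] E) (z' - b)) = z'
        rw [hT]
        simp
      · set z : E := (A.symm : E ≃L[ℝ] E) (z' - b) with hz
        have hTz : T z = z' := by
          rw [hT, hz]; simp
        rw [hmem]
        intro v₀ hv₀
        obtain ⟨u, hu, hvu⟩ := surj v₀ hv₀
        have h := (hmem' z').1 hz' u hu
        rw [← hTz] at h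
        have := ((core u hu).2 z).1 h
        rwa [hvu] at this
    · rintro ⟨z, hz, rfl⟩
      rw [hmem']
      intro u hu
      have hvn : ‖(‖Aad u‖⁻¹ • Aad u : E)‖ = 1 := by
        rw [norm_smul, norm_inv, norm_norm,
          inv_mul_cancel₀ (ne_of_gt (norm_pos_iff.2 (core u hu).1))]
      exact ((core u hu).2 z).2 ((hmem z).1 hz _ hvn)
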